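/- Suppose D(t̄^k) ≥ ε_ij^k > 0, and suppose D(t) ≥ D(t̄^k) − d_i t_{i,i} − d_j t_{i,j} − (d_i + d_j)(t_{i0} + ϑ) where ϑ = D(t̄^k)/(2R(d_i + d_j)) and t_{i,i}, t_{i,j}, t_{i0} ≥ 0, R > 1/2. If ε_ij^k > Γ := d_i(t_{i,i} + t_{i0}) + d_j(t_{i,j} + t_{i0}) and R > ε_ij^k / (2(ε_ij^k − Γ)), then D(t) ≥ D(t̄^k)(1 − 1/(2R)) − Γ > 0. -/

import Mathlib

/-- Key inequality in the proof of Corollary 2 (self-adaptive scheme): with parameters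
adapted to the observed delays, the disagreement remains strictly positive. -/
theorem self_adaptive_positive
    (D : ℝ → ℝ) (tbar t εk R di dj tii tij ti0 : ℝ)
    (hdi : 0 < di) (hdj : 0 < dj)
    (htii : 0 ≤ tii) (htij : 0 ≤ tij) (hti0 : 0 ≤ ti0)
    (hεk : 0 < εk) (hD : εk ≤ D tbar) (hR : 1 / 2 < R)
    (hineq : D tbar - di * tii - dj * tij - (di + dj) * (ti0 + D tbar / (2 * R * (di + dj)))
      ≤ D t)
    (hΓ : di * (tii + ti0) + dj * (tij + ti0) < εk)
    (hRk : εk / (2 * (εk - (di * (tii + ti0) + dj * (tij + ti0)))) < R) :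
    D tbar * (1 - 1 / (2 * R)) - (di * (tii + ti0) + dj * (tij + ti0)) ≤ D t ∧
    0 < D t := by
  have hR0 : 0 < R := by linarith
  have hsum : 0 < di + dj := by linarith
  set Γ := di * (tii + ti0) + dj * (tij + ti0) with hΓdef
  have hΓpos : 0 < εk - Γ := by linarith
  have hkey : (di + dj) * (D tbar / (2 * R * (di + dj))) = D tbar * (1 / (2 * R)) := by
    field_simp
  have h1 : D tbar * (1 - 1 / (2 * R)) - Γ ≤ D t := by
    have : D tbar * (1 - 1 / (2 * R)) - Γ
        = D tbar - di * tii - dj * tij - (di + dj) * (ti0 + D tbar / (2 * R * (di + dj))) := by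
      rw [mul_add, hkey, hΓdef]; ring
    linarith [this ▸ hineq]
  refine ⟨h1, ?_⟩
  have hεkR : εk < 2 * R * (εk - Γ) := by
    have := (div_lt_iff₀ (by linarith : (0:ℝ) < 2 * (εk - Γ))).mp hRk
    nlinarith
  have hfrac : εk * (1 / (2 * R)) < εk - Γ := by
    rw [mul_one_div, div_lt_iff₀ (by linarith : (0:ℝ) < 2 * R)]
    nlinarith
  have hcoef : 0 < 1 - 1 / (2 * R) := by
    have : 1 / (2 * R) < 1 := by
      rw [div_lt_one (by linarith)]; linarith
    linarith
  nlinarith [mul_le_mul_of_nonneg_right hD (le_of_lt hcoef)]
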